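/- Let f: T_{xm,yn} → T_{m,n} be coordinatewise reduction, with m,n not both 1. If the preimage of every line on T_{m,n} under f is a line on T_{xm,yn}, then τ_{xm,yn} = τ_{m,n}. -/

import Mathlib

/-- A line on the discrete torus `ZMod m × ZMod n`: the image of an integer line
`{A + k•(u,v) : k ∈ ℤ}` with `gcd(u,v) = 1`. -/
def torusLine (m n : ℕ) (L : Set (ZMod m × ZMod n)) : Prop :=
  ∃ (A : ZMod m × ZMod n) (u v : ℤ), Int.gcd u v = 1 ∧
    L = {P | ∃ k : ℤ, P = (A.1 + ((k * u : ℤ) : ZMod m), A.2 + ((k * v : ℤ) : ZMod n))}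

/-- Three points of the torus are collinear if some line contains all three. -/
def torusCollinear (m n : ℕ) (P Q R : ZMod m × ZMod n) : Prop :=
  ∃ L, torusLine m n L ∧ P ∈ L ∧ Q ∈ L ∧ R ∈ L

/-- No three (distinct) points of `S` lie on a common line. -/
def noThreeInLine (m n : ℕ) (S : Set (ZMod m × ZMod n)) : Prop :=
  ∀ P ∈ S, ∀ Q ∈ S, ∀ R ∈ S, P ≠ Q → P ≠ R → Q ≠ R → ¬ torusCollinear m n P Q R

/-- `tau m n`: maximal number of points on the torus with no three collinear. -/
noncomputable def tau (m n : ℕ) : ℕ :=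
  sSup {k | ∃ S : Finset (ZMod m × ZMod n), noThreeInLine m n ↑S ∧ S.card = k}

lemma exists_line_through (m n : ℕ) (z w : ZMod m × ZMod n) :
    ∃ L, torusLine m n L ∧ z ∈ L ∧ w ∈ L := by
  obtain ⟨a, ha⟩ := ZMod.intCast_surjective (w.1 - z.1)
  obtain ⟨b, hb⟩ := ZMod.intCast_surjective (w.2 - z.2)
  by_cases h0 : a = 0 ∧ b = 0
  · obtain ⟨rfl, rfl⟩ := h0
    have h1 : w.1 = z.1 := by
      have : w.1 - z.1 = 0 := by rw [← ha]; simp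
      exact sub_eq_zero.mp this
    have h2 : w.2 = z.2 := by
      have : w.2 - z.2 = 0 := by rw [← hb]; simp
      exact sub_eq_zero.mp this
    refine ⟨_, ⟨z, 0, 1, by simp, rfl⟩, ⟨0, ?_⟩, ⟨0, ?_⟩⟩
    · simp [Prod.ext_iff]
    · simp [Prod.ext_iff, h1, h2]
  · have hg : 0 < Int.gcd a b := Int.gcd_pos_iff.mpr (by omega)
    refine ⟨_, ⟨z, a / Int.gcd a b, b / Int.gcd a b,
      Int.gcd_div_gcd_div_gcd hg, rfl⟩, ⟨0, ?_⟩, ⟨(Int.gcd a b : ℤ), ?_⟩⟩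
    · simp [Prod.ext_iff]
    · rw [Int.mul_ediv_cancel' (Int.gcd_dvd_left a b), Int.mul_ediv_cancel' (Int.gcd_dvd_right a b)]
      rw [ha, hb]
      simp [Prod.ext_iff]

lemma collinear_map (m n x y : ℕ)
    (f : ZMod (x * m) × ZMod (y * n) → ZMod m × ZMod n)
    (hf : f = fun P => (ZMod.castHom (dvd_mul_left m x) (ZMod m) P.1,
                        ZMod.castHom (dvd_mul_left n y) (ZMod n) P.2))
    {P Q R : ZMod (x*m) × ZMod (y*n)} (h : torusCollinear (x*m) (y*n) P Q R) :
    torusCollinear m n (f P) (f Q) (f R) := by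
  subst hf
  obtain ⟨L, ⟨A, u, v, huv, rfl⟩, hP, hQ, hR⟩ := h
  refine ⟨_, ⟨(ZMod.castHom (dvd_mul_left m x) (ZMod m) A.1,
              ZMod.castHom (dvd_mul_left n y) (ZMod n) A.2), u, v, huv, rfl⟩, ?_, ?_, ?_⟩
  · obtain ⟨k, hk⟩ := hP; exact ⟨k, by rw [hk]; simp [Prod.ext_iff, map_add, map_intCast, -ZMod.castHom_apply]⟩
  · obtain ⟨k, hk⟩ := hQ; exact ⟨k, by rw [hk]; simp [Prod.ext_iff, map_add, map_intCast, -ZMod.castHom_apply]⟩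
  · obtain ⟨k, hk⟩ := hR; exact ⟨k, by rw [hk]; simp [Prod.ext_iff, map_add, map_intCast, -ZMod.castHom_apply]⟩

theorem stmt5 (m n x y : ℕ) (hm : 0 < m) (hn : 0 < n) (hx : 0 < x) (hy : 0 < y)
    (hmn : ¬ (m = 1 ∧ n = 1))
    (f : ZMod (x * m) × ZMod (y * n) → ZMod m × ZMod n)
    (hf : f = fun P => (ZMod.castHom (dvd_mul_left m x) (ZMod m) P.1,
                        ZMod.castHom (dvd_mul_left n y) (ZMod n) P.2))
    (hpre : ∀ L : Set (ZMod m × ZMod n), torusLine m n L →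
      torusLine (x * m) (y * n) (f ⁻¹' L)) :
    tau (x * m) (y * n) = tau m n := by
  haveI : NeZero m := ⟨hm.ne'⟩
  haveI : NeZero n := ⟨hn.ne'⟩
  haveI : NeZero (x * m) := ⟨(Nat.mul_pos hx hm).ne'⟩
  haveI : NeZero (y * n) := ⟨(Nat.mul_pos hy hn).ne'⟩
  have hbddS : BddAbove {k | ∃ S : Finset (ZMod m × ZMod n),
      noThreeInLine m n ↑S ∧ S.card = k} := by
    refine ⟨Fintype.card (ZMod m × ZMod n), fun k hk => ?_⟩
    obtain ⟨S, _, rfl⟩ := hk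
    exact S.card_le_univ
  have hbddB : BddAbove {k | ∃ S : Finset (ZMod (x * m) × ZMod (y * n)),
      noThreeInLine (x * m) (y * n) ↑S ∧ S.card = k} := by
    refine ⟨Fintype.card (ZMod (x * m) × ZMod (y * n)), fun k hk => ?_⟩
    obtain ⟨S, _, rfl⟩ := hk
    exact S.card_le_univ
  have hemptyB : (0 : ℕ) ∈ {k | ∃ S : Finset (ZMod (x * m) × ZMod (y * n)),
      noThreeInLine (x * m) (y * n) ↑S ∧ S.card = k} :=
    ⟨∅, by intro P hP; simp at hP, Finset.card_empty⟩
  have hemptyS : (0 : ℕ) ∈ {k | ∃ S : Finset (ZMod m × ZMod n),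
      noThreeInLine m n ↑S ∧ S.card = k} :=
    ⟨∅, by intro P hP; simp at hP, Finset.card_empty⟩
  -- two points exist in the small torus
  have hcard2 : 1 < Fintype.card (ZMod m × ZMod n) := by
    rw [Fintype.card_prod, ZMod.card, ZMod.card]
    rcases Nat.lt_or_ge 1 (m * n) with h | h
    · exact h
    · have h1 : m * n = 1 := le_antisymm h (Nat.mul_pos hm hn)
      exact absurd ⟨Nat.eq_one_of_mul_eq_one_right h1, Nat.eq_one_of_mul_eq_one_left h1⟩ hmn
  obtain ⟨p0, q0, hp0q0⟩ := Fintype.exists_pair_of_one_lt_card hcard2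
  have htwo : (2 : ℕ) ∈ {k | ∃ S : Finset (ZMod m × ZMod n),
      noThreeInLine m n ↑S ∧ S.card = k} := by
    refine ⟨{p0, q0}, ?_, Finset.card_pair hp0q0⟩
    intro P hP Q hQ R hR hPQ hPR hQR _
    simp only [Finset.coe_insert, Finset.coe_singleton, Set.mem_insert_iff,
      Set.mem_singleton_iff] at hP hQ hR
    rcases hP with rfl | rfl <;> rcases hQ with rfl | rfl <;>
      rcases hR with rfl | rfl <;> simp_all
  unfold tau
  apply le_antisymm
  · -- big ≤ small
    apply csSup_le ⟨0, hemptyB⟩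
    intro k hk
    obtain ⟨S, hS, rfl⟩ := hk
    by_cases hc : S.card ≤ 2
    · exact le_trans hc (le_csSup hbddS htwo)
    · push_neg at hc
      have hinj : Set.InjOn f ↑S := by
        intro P hP Q hQ hfPQ
        by_contra hne
        have hPm : P ∈ S := hP
        have hQm : Q ∈ S := hQ
        have hQP : Q ∈ S.erase P := Finset.mem_erase.mpr ⟨fun h => hne h.symm, hQm⟩
        have hcard' : 0 < ((S.erase P).erase Q).card := by
          rw [Finset.card_erase_of_mem hQP, Finset.card_erase_of_mem hPm]
          omega
        obtain ⟨R, hR⟩ := Finset.card_pos.mp hcard'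
        obtain ⟨hRQ, hRP, hRm⟩ : R ≠ Q ∧ R ≠ P ∧ R ∈ S := by
          obtain ⟨h1, h2⟩ := Finset.mem_erase.mp hR
          obtain ⟨h3, h4⟩ := Finset.mem_erase.mp h2
          exact ⟨h1, h3, h4⟩
        obtain ⟨L, hL, hz, hw⟩ := exists_line_through m n (f P) (f R)
        exact hS P hP Q hQ R hRm hne (Ne.symm hRP) (Ne.symm hRQ)
          ⟨f ⁻¹' L, hpre L hL, hz, by simpa [Set.mem_preimage, hfPQ] using hz, hw⟩
      have himg : noThreeInLine m n ↑(S.image f) := by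
        intro p hp q hq r hr hpq hpr hqr hcol
        obtain ⟨L, hL, hpL, hqL, hrL⟩ := hcol
        simp only [Finset.coe_image, Set.mem_image, Finset.mem_coe] at hp hq hr
        obtain ⟨P, hPm, rfl⟩ := hp
        obtain ⟨Q, hQm, rfl⟩ := hq
        obtain ⟨R, hRm, rfl⟩ := hr
        exact hS P hPm Q hQm R hRm (fun h => hpq (by rw [h])) (fun h => hpr (by rw [h]))
          (fun h => hqr (by rw [h]))
          ⟨f ⁻¹' L, hpre L hL, hpL, hqL, hrL⟩
      have hcardim : (S.image f).card = S.card := Finset.card_image_of_injOn hinj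
      exact le_csSup hbddS ⟨S.image f, himg, hcardim⟩
  · -- small ≤ big
    apply csSup_le ⟨0, hemptyS⟩
    intro k hk
    obtain ⟨S, hS, rfl⟩ := hk
    set g : ZMod m × ZMod n → ZMod (x * m) × ZMod (y * n) :=
      fun p => (((p.1.val : ℕ) : ZMod (x * m)), ((p.2.val : ℕ) : ZMod (y * n))) with hg
    have hfg : ∀ p, f (g p) = p := by
      intro p
      rw [hf, hg]
      simp only [map_natCast]
      exact Prod.ext (ZMod.natCast_rightInverse p.1) (ZMod.natCast_rightInverse p.2)
    have hginj : Function.Injective g := fun p q h => by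
      rw [← hfg p, ← hfg q, h]
    have himg : noThreeInLine (x * m) (y * n) ↑(S.image g) := by
      intro P hP Q hQ R hR hPQ hPR hQR hcol
      simp only [Finset.coe_image, Set.mem_image, Finset.mem_coe] at hP hQ hR
      obtain ⟨p, hpm, rfl⟩ := hP
      obtain ⟨q, hqm, rfl⟩ := hQ
      obtain ⟨r, hrm, rfl⟩ := hR
      have hcol' := collinear_map m n x y f hf hcol
      rw [hfg, hfg, hfg] at hcol'
      exact hS p hpm q hqm r hrm (fun h => hPQ (by rw [h])) (fun h => hPR (by rw [h]))
        (fun h => hQR (by rw [h])) hcol'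
    exact le_csSup hbddB ⟨S.image g, himg, Finset.card_image_of_injective S hginj⟩
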